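/- Let n ≥ 2, k, q ≥ 1, and r ≥ s ≥ 1 be integers with gcd(n, k−1, q) = 1, and suppose that q(r−s) ≡ 2(k−1) (mod n) or q(r+s) ≡ 0 (mod n) (i.e., P(r,n,k,s,q) is of type Z̃). Then P(r,n,k,s,q) is perfect if and only if |r−s| = 1, gcd(n,q) = 1, and gcd(k−1−qr, n) = 1. -/

import Mathlib

def cycWord (n : ℕ) (j : ℕ) (w : FreeGroup (ZMod n)) : FreeGroup (ZMod n) :=
  FreeGroup.map (fun i => i + (j : ZMod n)) w

def cycRelators (n : ℕ) (w : FreeGroup (ZMod n)) : Set (FreeGroup (ZMod n)) :=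
  {u | ∃ j < n, u = cycWord n j w}

def Gn (n : ℕ) (w : FreeGroup (ZMod n)) : Type := PresentedGroup (cycRelators n w)

instance (n : ℕ) (w : FreeGroup (ZMod n)) : Group (Gn n w) :=
  inferInstanceAs (Group (PresentedGroup (cycRelators n w)))

def Pword (r n k s q : ℕ) : FreeGroup (ZMod n) :=
  ((List.range r).map (fun i => FreeGroup.of ((i * q : ℕ) : ZMod n))).prod *
  (((List.range s).map (fun i => FreeGroup.of (((k - 1) + i * q : ℕ) : ZMod n))).prod)⁻¹

def Pgroup (r n k s q : ℕ) : Type := Gn n (Pword r n k s q)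

instance (r n k s q : ℕ) : Group (Pgroup r n k s q) :=
  inferInstanceAs (Group (Gn n (Pword r n k s q)))

namespace Stmt10

abbrev R (n : ℕ) := AddMonoidAlgebra ℤ (ZMod n)

noncomputable def fpoly (n k q r s : ℕ) : R n :=
  ((List.range r).map (fun i => AddMonoidAlgebra.single ((i * q : ℕ) : ZMod n) (1:ℤ))).sum -
  ((List.range s).map (fun i => AddMonoidAlgebra.single (((k - 1) + i * q : ℕ) : ZMod n) (1:ℤ))).sum

noncomputable def abHom (n : ℕ) : FreeGroup (ZMod n) →* Multiplicative (R n) :=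
  FreeGroup.lift (fun i => Multiplicative.ofAdd (AddMonoidAlgebra.single i (1:ℤ)))

lemma ofAdd_list_sum {M : Type*} [AddMonoid M] (l : List M) :
    Multiplicative.ofAdd l.sum = (l.map Multiplicative.ofAdd).prod := by
  induction l with
  | nil => rfl
  | cons a t ih => simp only [List.sum_cons, List.map_cons, List.prod_cons, ← ih]; rfl

lemma abHom_listprod (n : ℕ) (l : List (ZMod n)) :
    abHom n ((l.map FreeGroup.of).prod) =
      Multiplicative.ofAdd ((l.map (fun i => AddMonoidAlgebra.single i (1:ℤ))).sum) := by
  rw [map_list_prod, List.map_map, ofAdd_list_sum, List.map_map]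
  congr 1
  apply List.map_congr_left
  intro a _
  simp [abHom]

lemma abHom_Pword (n k q r s : ℕ) :
    abHom n (Pword r n k s q) = Multiplicative.ofAdd (fpoly n k q r s) := by
  unfold Pword fpoly
  rw [map_mul, map_inv]
  rw [show ((List.range r).map (fun i => FreeGroup.of ((i * q : ℕ) : ZMod n))) =
      (((List.range r).map (fun i => ((i * q : ℕ) : ZMod n))).map FreeGroup.of) by
    rw [List.map_map]; rfl]
  rw [show ((List.range s).map (fun i => FreeGroup.of (((k - 1) + i * q : ℕ) : ZMod n))) =
      (((List.range s).map (fun i => (((k - 1) + i * q : ℕ) : ZMod n))).map FreeGroup.of) by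
    rw [List.map_map]; rfl]
  rw [abHom_listprod, abHom_listprod, List.map_map, List.map_map]
  rw [sub_eq_add_neg]
  rfl

lemma abHom_cycWord (n : ℕ) (j : ℕ) (w : FreeGroup (ZMod n)) :
    (abHom n (cycWord n j w)) =
      Multiplicative.ofAdd
        (AddMonoidAlgebra.single ((j : ZMod n)) (1:ℤ) * (abHom n w).toAdd) := by
  have key : (abHom n).comp (FreeGroup.map (fun i => i + (j : ZMod n))) =
      (AddMonoidHom.toMultiplicative
        (AddMonoidHom.mulLeft (AddMonoidAlgebra.single ((j : ZMod n)) (1:ℤ)))).comp (abHom n) := by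
    apply FreeGroup.ext_hom
    intro a
    simp only [MonoidHom.comp_apply, FreeGroup.map.of]
    unfold abHom
    rw [FreeGroup.lift_apply_of, FreeGroup.lift_apply_of]
    show Multiplicative.ofAdd (AddMonoidAlgebra.single (a + (j : ZMod n)) (1:ℤ)) =
      Multiplicative.ofAdd (AddMonoidAlgebra.single ((j : ZMod n)) (1:ℤ) *
        AddMonoidAlgebra.single a (1:ℤ))
    rw [AddMonoidAlgebra.single_mul_single, one_mul, add_comm]
  have := congrArg (fun φ => φ w) key
  simpa [cycWord] using this

end Stmt10

namespace Stmt10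

variable (n k q r s : ℕ)

lemma single_mem_ker_case (hn : 2 ≤ n)
    (hItop : Ideal.span {fpoly n k q r s} = ⊤) : True := trivial

set_option maxHeartbeats 1000000 in
theorem bridge (hn : 2 ≤ n) :
    commutator (Pgroup r n k s q) = ⊤ ↔ Ideal.span {fpoly n k q r s} = ⊤ := by
  haveI : NeZero n := ⟨by omega⟩
  set f := fpoly n k q r s with hf
  set rels := cycRelators n (Pword r n k s q) with hrels
  constructor
  · intro hcom
    set I := Ideal.span {f} with hI
    set mkQ := Ideal.Quotient.mk I with hmkQ
    set φ : ZMod n → Multiplicative (R n ⧸ I) :=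
      fun i => Multiplicative.ofAdd (mkQ (AddMonoidAlgebra.single i (1:ℤ))) with hφ
    have hcomp : FreeGroup.lift φ =
        (AddMonoidHom.toMultiplicative mkQ.toAddMonoidHom).comp (abHom n) := by
      apply FreeGroup.ext_hom
      intro a
      simp only [MonoidHom.comp_apply, FreeGroup.lift_apply_of]
      simp only [abHom, FreeGroup.lift_apply_of]
      rfl
    have hrel : ∀ u ∈ rels, FreeGroup.lift φ u = 1 := by
      rintro u ⟨j, hj, rfl⟩
      rw [hcomp]
      simp only [MonoidHom.comp_apply]
      rw [abHom_cycWord, abHom_Pword]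
      have hfI : f ∈ I := Ideal.subset_span (Set.mem_singleton f)
      have hm : (AddMonoidAlgebra.single ((j : ZMod n)) (1:ℤ)) *
          (Multiplicative.toAdd (Multiplicative.ofAdd (fpoly n k q r s))) ∈ I :=
        Ideal.mul_mem_left I _ hfI
      exact congrArg Multiplicative.ofAdd (Ideal.Quotient.eq_zero_iff_mem.mpr hm)
    set α : Pgroup r n k s q →* Multiplicative (R n ⧸ I) := PresentedGroup.toGroup hrel with hα
    have hker : commutator (Pgroup r n k s q) ≤ α.ker :=
      Abelianization.commutator_subset_ker α
    rw [hcom] at hker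
    have h0 : α (PresentedGroup.of (0 : ZMod n)) = 1 := hker (Set.mem_univ _)
    have hof : α (PresentedGroup.of (0 : ZMod n)) = φ 0 := PresentedGroup.toGroup.of hrel
    have h0' : φ 0 = 1 := hof ▸ h0
    have h1 : mkQ (AddMonoidAlgebra.single (0 : ZMod n) (1:ℤ)) = 0 :=
      Multiplicative.ofAdd.injective (a₁ := mkQ (AddMonoidAlgebra.single (0 : ZMod n) (1:ℤ)))
        (a₂ := 0) h0'
    have hone : (1 : R n) ∈ I := by
      rw [AddMonoidAlgebra.one_def]
      exact Ideal.Quotient.eq_zero_iff_mem.mp h1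
    exact (Ideal.eq_top_iff_one I).mpr hone
  · intro hItop
    set G := Pgroup r n k s q with hG
    set A := Abelianization G with hA
    set ψ : R n →+ Additive A :=
      (Finsupp.liftAddHom (fun i =>
        zmultiplesHom (Additive A) (Additive.ofMul (Abelianization.of (PresentedGroup.of i))))).comp
          AddMonoidAlgebra.coeffAddEquiv.toAddMonoidHom with hψ
    have hψ_single : ∀ (i : ZMod n) (c : ℤ),
        ψ (AddMonoidAlgebra.single i c) =
          c • Additive.ofMul (Abelianization.of (PresentedGroup.of (rels := rels) i)) := by
      intro i c
      rw [hψ]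
      exact Finsupp.liftAddHom_apply_single _ i c
    set h1 : FreeGroup (ZMod n) →* A :=
      (AddMonoidHom.toMultiplicativeLeft ψ).comp (abHom n) with hh1
    set h2 : FreeGroup (ZMod n) →* A :=
      (Abelianization.of (G := G)).comp (QuotientGroup.mk' (Subgroup.normalClosure rels)) with hh2
    have h12 : h1 = h2 := by
      apply FreeGroup.ext_hom
      intro a
      rw [hh1, hh2]
      simp only [MonoidHom.comp_apply]
      show Additive.toMul (ψ ((abHom n (FreeGroup.of a)).toAdd)) = _
      have : abHom n (FreeGroup.of a) =
          Multiplicative.ofAdd (AddMonoidAlgebra.single a (1:ℤ)) := FreeGroup.lift_apply_of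
      rw [this]
      show Additive.toMul (ψ (AddMonoidAlgebra.single a (1:ℤ))) = _
      rw [hψ_single, one_smul]
      rfl
    have hpsi_rel : ∀ w : FreeGroup (ZMod n),
        ψ ((abHom n w).toAdd) = Additive.ofMul
          (Abelianization.of (G := G) ((QuotientGroup.mk' (Subgroup.normalClosure rels)) w)) := by
      intro w
      have := congrArg (fun φ : FreeGroup (ZMod n) →* A => φ w) h12
      simp only [hh1, hh2, MonoidHom.comp_apply] at this
      exact congrArg Additive.ofMul this
    have hmulf : ∀ g : R n, ψ (g * f) = 0 := by
      intro g
      induction g using AddMonoidAlgebra.induction with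
      | zero => rw [zero_mul, map_zero]
      | single_add a c g' _ _ ih =>
        rw [add_mul, map_add, ih, add_zero]
        have hsm : (AddMonoidAlgebra.single a c : R n) = c • (AddMonoidAlgebra.single a (1:ℤ)) := by
          simp [Finsupp.smul_single]
        rw [hsm, smul_mul_assoc, map_zsmul]
        have hsingle1 : (AddMonoidAlgebra.single a (1:ℤ)) * f =
            (abHom n (cycWord n a.val (Pword r n k s q))).toAdd := by
          rw [abHom_cycWord, abHom_Pword]
          rw [show (((a.val : ℕ)) : ZMod n) = a from by simp [ZMod.natCast_val, ZMod.cast_id]]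
          rfl
        rw [hsingle1, hpsi_rel]
        have hrelmem : cycWord n a.val (Pword r n k s q) ∈ rels := ⟨a.val, a.val_lt, rfl⟩
        have : (QuotientGroup.mk' (Subgroup.normalClosure rels))
            (cycWord n a.val (Pword r n k s q)) = 1 := by
          rw [QuotientGroup.mk'_apply]
          exact (QuotientGroup.eq_one_iff _).mpr (Subgroup.subset_normalClosure hrelmem)
        rw [this]; erw [map_one (Abelianization.of (G := G))]
        exact smul_zero c
    have hgen : ∀ i : ZMod n, Abelianization.of (PresentedGroup.of (rels := rels) i) = 1 := by
      intro i
      obtain ⟨g, hg⟩ := Ideal.mem_span_singleton'.mp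
        ((Ideal.eq_top_iff_one _).mp hItop)
      have : ψ (AddMonoidAlgebra.single i (1:ℤ)) = 0 := by
        have h := hmulf ((AddMonoidAlgebra.single i (1:ℤ)) * g)
        rw [mul_assoc, hg, mul_one] at h
        exact h
      rw [hψ_single, one_smul] at this
      exact this
    have hpsizero : ∀ x : R n, ψ x = 0 := by
      intro x
      induction x using AddMonoidAlgebra.induction with
      | zero => exact map_zero ψ
      | single_add a c g' _ _ ih =>
        rw [map_add, ih, add_zero]
        have : (AddMonoidAlgebra.single a c : R n) = c • (AddMonoidAlgebra.single a (1:ℤ)) := by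
          simp [Finsupp.smul_single]
        rw [this, map_zsmul, hψ_single, one_smul, hgen]
        exact smul_zero c
    have hofall : ∀ g : G, Abelianization.of g = 1 := by
      intro g
      obtain ⟨w, rfl⟩ := QuotientGroup.mk'_surjective (Subgroup.normalClosure rels) g
      have := hpsi_rel w
      rw [hpsizero] at this
      have h' := congrArg Additive.toMul this.symm
      simpa using h'
    rw [eq_top_iff]
    intro g _
    have := hofall g
    exact (QuotientGroup.eq_one_iff g).mp this

end Stmt10

namespace Stmt10

section Chars

variable {n : ℕ} [NeZero n] {F : Type*} [CommRing F]

omit [NeZero n] in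
lemma pow_mod_n {ξ : F} (hξ : ξ ^ n = 1) (m : ℕ) : ξ ^ (m % n) = ξ ^ m := by
  conv_rhs => rw [← Nat.mod_add_div m n, pow_add, pow_mul, hξ, one_pow, mul_one]

omit [NeZero n] in
lemma pow_eq_of_modeq {ξ : F} (hξ : ξ ^ n = 1) {a b : ℕ} (h : a ≡ b [MOD n]) :
    ξ ^ a = ξ ^ b := by
  rw [← pow_mod_n hξ a, ← pow_mod_n hξ b, h]

/-- The ring homomorphism `ℤ[ZMod n] →+* F` sending the generator to `ξ` with `ξ^n = 1`. -/
noncomputable def charHom (n : ℕ) [NeZero n] (ξ : F) (hξ : ξ ^ n = 1) : R n →+* F :=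
  AddMonoidAlgebra.liftNCRingHom (Int.castRingHom F)
    { toFun := fun a => ξ ^ (Multiplicative.toAdd a).val,
      map_one' := by
        show ξ ^ (0 : ZMod n).val = 1
        rw [ZMod.val_zero, pow_zero],
      map_mul' := by
        intro a b
        show ξ ^ ((Multiplicative.toAdd a) + (Multiplicative.toAdd b)).val = _
        rw [ZMod.val_add, pow_mod_n hξ, pow_add] }
    (fun _ _ => Commute.all _ _)

lemma charHom_single (ξ : F) (hξ : ξ ^ n = 1) (m : ℕ) (c : ℤ) :
    charHom n ξ hξ (AddMonoidAlgebra.single ((m : ZMod n)) c) = (c : F) * ξ ^ m := by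
  unfold charHom
  rw [AddMonoidAlgebra.liftNCRingHom]
  show (AddMonoidAlgebra.liftNC _ _) (AddMonoidAlgebra.single _ c) = _
  rw [AddMonoidAlgebra.liftNC_single]
  congr 1
  show ξ ^ ((m : ZMod n)).val = ξ ^ m
  rw [ZMod.val_natCast, pow_mod_n hξ]

/-- `ζ := χ (single 1 1)` for a ring hom `χ : ℤ[ZMod n] →+* F`. -/
noncomputable def zetaOf (χ : R n →+* F) : F := χ (AddMonoidAlgebra.single (1 : ZMod n) 1)

lemma chi_single_nat (χ : R n →+* F) (m : ℕ) :
    χ (AddMonoidAlgebra.single ((m : ZMod n)) (1:ℤ)) = (zetaOf χ) ^ m := by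
  have h : (AddMonoidAlgebra.single ((m : ZMod n)) (1:ℤ)) =
      (AddMonoidAlgebra.single (1 : ZMod n) (1:ℤ)) ^ m := by
    rw [AddMonoidAlgebra.single_pow, one_pow]
    congr 1
    simp
  rw [h, map_pow]
  rfl

lemma zetaOf_pow_n (χ : R n →+* F) : (zetaOf χ) ^ n = 1 := by
  rw [← chi_single_nat χ n]
  rw [show ((n : ZMod n)) = 0 by simp]
  rw [show (AddMonoidAlgebra.single (0 : ZMod n) (1:ℤ)) = (1 : R n) from
    (AddMonoidAlgebra.one_def).symm]
  exact map_one χ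

lemma zetaOf_charHom (hn : 2 ≤ n) (ξ : F) (hξ : ξ ^ n = 1) : zetaOf (charHom n ξ hξ) = ξ := by
  unfold zetaOf
  rw [show ((1 : ZMod n)) = ((1 : ℕ) : ZMod n) by simp, charHom_single]
  simp

lemma list_range_sum (f : ℕ → F) (m : ℕ) :
    ((List.range m).map f).sum = ∑ i ∈ Finset.range m, f i := by
  induction m with
  | zero => simp
  | succ m ih =>
    rw [List.range_succ, List.map_append, List.sum_append, Finset.sum_range_succ, ih]
    simp

lemma chi_fpoly (χ : R n →+* F) (k q r s : ℕ) :
    χ (fpoly n k q r s) =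
      (∑ i ∈ Finset.range r, ((zetaOf χ) ^ q) ^ i) -
        (zetaOf χ) ^ (k - 1) * ∑ i ∈ Finset.range s, ((zetaOf χ) ^ q) ^ i := by
  set ζ := zetaOf χ
  unfold fpoly
  rw [map_sub, map_list_sum, map_list_sum, List.map_map, List.map_map]
  have e1 : ((List.range r).map (⇑χ ∘ fun i => AddMonoidAlgebra.single ((i * q : ℕ) : ZMod n) (1:ℤ))) =
      (List.range r).map (fun i => (ζ ^ q) ^ i) := by
    apply List.map_congr_left
    intro i _
    show χ (AddMonoidAlgebra.single ((i * q : ℕ) : ZMod n) (1:ℤ)) = _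
    rw [chi_single_nat, ← pow_mul, mul_comm i q, pow_mul]
  have e2 : ((List.range s).map (⇑χ ∘ fun i => AddMonoidAlgebra.single (((k-1) + i * q : ℕ) : ZMod n) (1:ℤ))) =
      (List.range s).map (fun i => ζ ^ (k-1) * (ζ ^ q) ^ i) := by
    apply List.map_congr_left
    intro i _
    show χ (AddMonoidAlgebra.single (((k-1) + i * q : ℕ) : ZMod n) (1:ℤ)) = _
    rw [chi_single_nat, pow_add, ← pow_mul, mul_comm i q, pow_mul]
  rw [e1, e2, list_range_sum, list_range_sum]
  rw [← Finset.mul_sum]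

lemma chi_fpoly_mul (χ : R n →+* F) (k q r s : ℕ) :
    ((zetaOf χ) ^ q - 1) * χ (fpoly n k q r s) =
      ((zetaOf χ) ^ (q * r) - 1) - (zetaOf χ) ^ (k - 1) * ((zetaOf χ) ^ (q * s) - 1) := by
  set ζ := zetaOf χ
  rw [chi_fpoly, mul_sub]
  have g1 : (ζ ^ q - 1) * (∑ i ∈ Finset.range r, (ζ ^ q) ^ i) = ζ ^ (q * r) - 1 := by
    rw [mul_comm, geom_sum_mul, ← pow_mul]
  have g2 : (ζ ^ q - 1) * (ζ ^ (k-1) * ∑ i ∈ Finset.range s, (ζ ^ q) ^ i) =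
      ζ ^ (k-1) * (ζ ^ (q * s) - 1) := by
    rw [mul_left_comm, mul_comm (ζ^q - 1), geom_sum_mul, ← pow_mul]
  rw [g1, g2]

end Chars


lemma hunit_of_span_top {n : ℕ} (f : R n) (h : Ideal.span {f} = ⊤)
    {F : Type*} [CommRing F] (χ : R n →+* F) : IsUnit (χ f) := by
  obtain ⟨g, hg⟩ := Ideal.mem_span_singleton'.mp ((Ideal.eq_top_iff_one _).mp h)
  exact IsUnit.of_mul_eq_one (χ g) (by rw [← map_mul, mul_comm f g, hg, map_one])

lemma succ_pow_ge (s p : ℕ) (hs : 1 ≤ s) (hp : 1 ≤ p) : s ^ p + p ≤ (s + 1) ^ p := by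
  induction p with
  | zero => omega
  | succ p ih =>
    rcases Nat.eq_zero_or_pos p with hp0 | hp0
    · subst hp0; simp
    · have h1 := ih hp0
      have h3 : (s ^ p + p) * (s + 1) ≤ (s + 1) ^ p * (s + 1) := Nat.mul_le_mul_right _ h1
      have h2 : (s + 1) ^ (p + 1) = (s + 1) ^ p * (s + 1) := by ring
      have h4 : s ^ (p+1) + (p+1) ≤ (s ^ p + p) * (s + 1) := by
        have hsp : s ^ (p+1) = s ^ p * s := by ring
        nlinarith [Nat.one_le_pow p s hs]
      omega

lemma n_odd {n k q r s : ℕ} (h2 : Nat.gcd n q = 1) (h1 : r = s + 1)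
    (htype : (q * (r - s) : ℤ) ≡ 2 * (k - 1) [ZMOD (n : ℤ)] ∨
             (q * (r + s) : ℤ) ≡ 0 [ZMOD (n : ℤ)]) : ¬ 2 ∣ n := by
  intro h2n
  cases htype with
  | inl hA =>
    have hd : (n:ℤ) ∣ 2 * ((k:ℤ) - 1) - (q:ℤ) * ((r:ℤ) - (s:ℤ)) := hA.dvd
    have hrs1 : ((r:ℤ) - (s:ℤ)) = 1 := by rw [h1]; push_cast; ring
    rw [hrs1, mul_one] at hd
    have h2d : (2:ℤ) ∣ (q:ℤ) := by
      have h2n' : (2:ℤ) ∣ (n:ℤ) := by exact_mod_cast Int.natCast_dvd_natCast.mpr h2n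
      have := dvd_trans h2n' hd
      omega
    have hq2 : 2 ∣ q := by exact_mod_cast h2d
    have : 2 ∣ Nat.gcd n q := Nat.dvd_gcd h2n hq2
    omega
  | inr hB =>
    have hd : (n:ℤ) ∣ 0 - (q:ℤ) * ((r:ℤ) + (s:ℤ)) := hB.dvd
    have hd' : (n:ℤ) ∣ (q:ℤ) * ((r:ℤ) + (s:ℤ)) := by
      rw [zero_sub] at hd; exact (dvd_neg).mp hd
    have hdn : n ∣ q * (r + s) := by exact_mod_cast hd'
    have hrs : n ∣ (r + s) := Nat.Coprime.dvd_of_dvd_mul_left h2 hdn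
    have hrw : r + s = 2 * s + 1 := by omega
    rw [hrw] at hrs
    have := dvd_trans h2n hrs
    omega

section Nec
variable {n k q r s : ℕ} [NeZero n]

lemma nec1 (hn : 2 ≤ n) (hrs : s ≤ r)
    (h : Ideal.span {fpoly n k q r s} = ⊤) : r = s + 1 := by
  have hu := hunit_of_span_top _ h (charHom n (1:ℤ) (one_pow n))
  have hval : charHom n (1:ℤ) (one_pow n) (fpoly n k q r s) = (r:ℤ) - s := by
    rw [chi_fpoly, zetaOf_charHom hn]
    simp
  rw [hval] at hu
  have := Int.isUnit_iff.mp hu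
  omega

lemma nec2 (hn : 2 ≤ n) (hk : 1 ≤ k) (hs : 1 ≤ s)
    (hgcd : Nat.gcd n (Nat.gcd (k - 1) q) = 1) (h1 : r = s + 1)
    (h : Ideal.span {fpoly n k q r s} = ⊤) : Nat.gcd n q = 1 := by
  by_contra hg
  set d := Nat.gcd n q with hd
  have hd0 : d ≠ 0 := by
    intro h0
    have : Nat.gcd n q = 0 := hd.symm.trans h0
    have := (Nat.gcd_eq_zero_iff.mp this).1
    omega
  have hd2 : 2 ≤ d := by omega
  have pp : d.minFac.Prime := Nat.minFac_prime (by omega)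
  set p := d.minFac with hp
  have hp2 : 2 ≤ p := pp.two_le
  have hpn : p ∣ n := (Nat.minFac_dvd d).trans (Nat.gcd_dvd_left n q)
  have hpq : p ∣ q := (Nat.minFac_dvd d).trans (Nat.gcd_dvd_right n q)
  have hpk : ¬ p ∣ (k - 1) := by
    intro hdvd
    have hz : p ∣ Nat.gcd n (Nat.gcd (k-1) q) := Nat.dvd_gcd hpn (Nat.dvd_gcd hdvd hpq)
    rw [hgcd] at hz
    exact pp.one_lt.ne' (Nat.dvd_one.mp hz)
  set N := r ^ p - s ^ p with hN
  have hsr : s ^ p + p ≤ r ^ p := by rw [h1]; exact succ_pow_ge s p hs (by omega)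
  have hN2 : 2 ≤ N := by omega
  have lp : N.minFac.Prime := Nat.minFac_prime (by omega)
  set l := N.minFac with hl
  haveI : Fact l.Prime := ⟨lp⟩
  have hlN : l ∣ N := Nat.minFac_dvd N
  have hsl : ((s : ZMod l)) ≠ 0 := by
    intro h0
    have hls : l ∣ s := (ZMod.natCast_eq_zero_iff s l).mp h0
    have hlrp : l ∣ r ^ p := by
      have heq : N + s ^ p = r ^ p := by omega
      exact heq ▸ Nat.dvd_add hlN (dvd_pow hls (by omega))
    have hlr : l ∣ r := lp.dvd_of_dvd_pow hlrp
    have hone : l ∣ 1 := by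
      have := Nat.dvd_sub hlr hls
      rwa [h1, Nat.add_sub_cancel_left] at this
    exact lp.one_lt.ne' (Nat.dvd_one.mp hone)
  set η : ZMod l := (r : ZMod l) * (s : ZMod l)⁻¹ with hη
  have hrp : ((r : ZMod l)) ^ p = ((s : ZMod l)) ^ p := by
    have hNl : ((N : ZMod l)) = 0 := (ZMod.natCast_eq_zero_iff N l).mpr hlN
    have hcast : ((N : ℕ) : ZMod l) = ((r^p : ℕ) : ZMod l) - ((s^p : ℕ) : ZMod l) := by
      rw [hN, Nat.cast_sub (by omega)]
    rw [hNl] at hcast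
    push_cast at hcast
    exact sub_eq_zero.mp hcast.symm
  have hηp : η ^ p = 1 := by
    rw [hη, mul_pow, inv_pow, hrp, mul_inv_cancel₀ (pow_ne_zero _ hsl)]
  haveI : Fact p.Prime := ⟨pp⟩
  have hknz : ((k - 1 : ℕ) : ZMod p) ≠ 0 := by
    intro h0
    exact hpk ((ZMod.natCast_eq_zero_iff _ p).mp h0)
  set b := (((k - 1 : ℕ) : ZMod p))⁻¹.val with hb
  have hmod : (k - 1) * b ≡ 1 [MOD p] := by
    have hcast : (((k-1) * b : ℕ) : ZMod p) = ((1 : ℕ) : ZMod p) := by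
      push_cast
      rw [hb, ZMod.natCast_val, ZMod.cast_id]
      exact mul_inv_cancel₀ hknz
    exact (ZMod.natCast_eq_natCast_iff _ _ _).mp hcast
  obtain ⟨t, ht⟩ : ∃ t, (k - 1) * b = p * t + 1 := by
    have h1p : 1 % p = 1 := Nat.mod_eq_of_lt pp.one_lt
    have hmm : (k - 1) * b % p = 1 % p := hmod
    refine ⟨((k-1) * b) / p, ?_⟩
    conv_lhs => rw [← Nat.div_add_mod ((k-1)*b) p]
    rw [hmm, h1p]
  set ξ := η ^ b with hξdef
  have hξp : ξ ^ p = 1 := by rw [hξdef, ← pow_mul, mul_comm b p, pow_mul, hηp, one_pow]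
  obtain ⟨u, hu⟩ := id hpn
  have hξn : ξ ^ n = 1 := by rw [hu, pow_mul, hξp, one_pow]
  have hunit := hunit_of_span_top _ h (charHom n ξ hξn)
  have hval : charHom n ξ hξn (fpoly n k q r s) = 0 := by
    rw [chi_fpoly, zetaOf_charHom hn]
    obtain ⟨v, hv⟩ := hpq
    have hξq : ξ ^ q = 1 := by rw [hv, pow_mul, hξp, one_pow]
    have hξk : ξ ^ (k - 1) = η := by
      rw [hξdef, ← pow_mul, mul_comm b (k-1), ht, pow_add, pow_mul, hηp, one_pow, pow_one, one_mul]
    rw [hξq]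
    simp only [one_pow, Finset.sum_const, Finset.card_range, nsmul_eq_mul, mul_one]
    rw [hξk, hη]
    have hfs : (r : ZMod l) * (s : ZMod l)⁻¹ * (s : ZMod l) = (r : ZMod l) := by
      field_simp
    rw [hfs]
    ring
  rw [hval] at hunit
  exact hunit.ne_zero rfl


lemma nec3 (hn : 2 ≤ n) (hk : 1 ≤ k)
    (h1 : r = s + 1) (h2 : Nat.gcd n q = 1) (hodd : ¬ 2 ∣ n)
    (htype : (q * (r - s) : ℤ) ≡ 2 * (k - 1) [ZMOD (n : ℤ)] ∨
             (q * (r + s) : ℤ) ≡ 0 [ZMOD (n : ℤ)])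
    (h : Ideal.span {fpoly n k q r s} = ⊤) :
    Int.gcd ((k : ℤ) - 1 - q * r) (n : ℤ) = 1 := by
  by_contra h3
  set e : ℤ := (k : ℤ) - 1 - q * r with he
  set g := Int.gcd e (n : ℤ) with hgdef
  clear_value g
  have hg0 : g ≠ 0 := by
    intro h0
    have hz := Int.gcd_eq_zero_iff.mp (hgdef.symm.trans h0)
    have hn0 : (n : ℤ) = 0 := hz.2
    rw [Nat.cast_eq_zero] at hn0
    omega
  have hg2 : 2 ≤ g := by omega
  have pp : g.minFac.Prime := Nat.minFac_prime (by omega)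
  set p := g.minFac with hpdef
  have hpg : p ∣ g := Nat.minFac_dvd g
  have hpn : p ∣ n := by
    have h1' : (g : ℤ) ∣ (n : ℤ) := by rw [hgdef]; exact Int.gcd_dvd_right _ _
    have h2' : (p : ℤ) ∣ (g : ℤ) := Int.natCast_dvd_natCast.mpr hpg
    exact_mod_cast h2'.trans h1'
  have hpe : (p : ℤ) ∣ e := by
    have h1' : (g : ℤ) ∣ e := by rw [hgdef]; exact Int.gcd_dvd_left _ _
    exact (Int.natCast_dvd_natCast.mpr hpg).trans h1'
  have hp2 : p ≠ 2 := by
    intro hp2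
    exact hodd (hp2 ▸ hpn)
  -- the field of characteristic 2 with a primitive p-th root of unity
  set F := AlgebraicClosure (ZMod 2) with hF
  have hchar : (2 : F) = 0 := by
    have : ((2 : ℕ) : F) = 0 := CharP.cast_eq_zero F 2
    exact_mod_cast this
  haveI : NeZero ((p : ℕ) : F) := by
    constructor
    intro h0
    have : (2 : ℕ) ∣ p := (CharP.cast_eq_zero_iff F 2 p).mp h0
    have := (Nat.Prime.eq_one_or_self_of_dvd pp 2 this).resolve_left (by omega)
    exact hp2 this.symm
  obtain ⟨ζ, hζroot⟩ := IsAlgClosed.exists_root (Polynomial.cyclotomic p F) (by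
    rw [Polynomial.degree_cyclotomic]
    have htot : 0 < Nat.totient p := Nat.totient_pos.mpr pp.pos
    exact_mod_cast (by omega : (Nat.totient p) ≠ 0))
  have hprim : IsPrimitiveRoot ζ p := Polynomial.isRoot_cyclotomic_iff.mp hζroot
  have hzp : ζ ^ p = 1 := hprim.pow_eq_one
  obtain ⟨u, hu⟩ := id hpn
  have hzn : ζ ^ n = 1 := by rw [hu, pow_mul, hzp, one_pow]
  have hznz : ζ ≠ 0 := by
    intro h0
    rw [h0, zero_pow pp.pos.ne'] at hzp
    exact zero_ne_one hzp
  have hunit := hunit_of_span_top _ h (charHom n ζ hzn)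
  set a := ζ ^ q with ha
  have ha1 : a ≠ 1 := by
    intro h0
    have : p ∣ q := hprim.dvd_of_pow_eq_one q h0
    have : p ∣ Nat.gcd n q := Nat.dvd_gcd hpn this
    rw [h2] at this
    exact pp.one_lt.ne' (Nat.dvd_one.mp this)
  have ha0 : a ≠ 0 := pow_ne_zero _ hznz
  -- ζ^(k-1) = a^r
  have hmodp : (k - 1) ≡ q * r [MOD p] := by
    rw [Nat.modEq_iff_dvd]
    have : ((q * r : ℕ) : ℤ) - ((k - 1 : ℕ) : ℤ) = -e := by
      rw [he, Nat.cast_sub hk]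
      push_cast
      ring
    rw [this]
    exact dvd_neg.mpr hpe
  have hbar : ζ ^ (k - 1) = a ^ r := by
    rw [pow_eq_of_modeq hzp hmodp, ha, ← pow_mul, mul_comm]
  -- a^(r+s) = 1
  have haa : a ^ (r + s) = 1 := by
    cases htype with
    | inl hA =>
      have hd : (n:ℤ) ∣ 2 * ((k:ℤ) - 1) - (q:ℤ) * ((r:ℤ) - (s:ℤ)) := hA.dvd
      have hrs1 : ((r:ℤ) - (s:ℤ)) = 1 := by rw [h1]; push_cast; ring
      rw [hrs1, mul_one] at hd
      have hmodn : q ≡ 2 * (k - 1) [MOD n] := by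
        rw [Nat.modEq_iff_dvd]
        have : ((2 * (k-1) : ℕ) : ℤ) - (q : ℤ) = 2 * ((k:ℤ) - 1) - (q:ℤ) := by
          rw [Nat.cast_mul, Nat.cast_sub hk]
          push_cast
          ring
        rw [this]
        exact hd
      have hz2k : ζ ^ q = ζ ^ (2 * (k - 1)) := pow_eq_of_modeq hzn hmodn
      have hstep : a = a ^ (2 * r) :=
        calc a = ζ ^ (2 * (k-1)) := by rw [ha, hz2k]
        _ = (ζ ^ (k-1)) ^ 2 := by rw [← pow_mul, mul_comm]
        _ = (a ^ r) ^ 2 := by rw [hbar]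
        _ = a ^ (2 * r) := by rw [← pow_mul, mul_comm]
      have hcancel : a ^ (r + s) * a = 1 * a := by
        rw [one_mul, ← pow_succ, show r + s + 1 = 2 * r by omega]
        exact hstep.symm
      exact mul_right_cancel₀ ha0 hcancel
    | inr hB =>
      have hd : (n:ℤ) ∣ 0 - (q:ℤ) * ((r:ℤ) + (s:ℤ)) := hB.dvd
      have hd' : n ∣ q * (r + s) := by
        rw [zero_sub, dvd_neg] at hd
        exact_mod_cast hd
      have : q * (r + s) ≡ 0 [MOD n] := (Nat.modEq_zero_iff_dvd).mpr hd'
      have := pow_eq_of_modeq hzn this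
      rw [pow_zero] at this
      rw [ha, ← pow_mul]
      exact this
  -- evaluate
  have hval : charHom n ζ hzn (fpoly n k q r s) = 0 := by
    have hmul := chi_fpoly_mul (charHom n ζ hzn) k q r s
    rw [zetaOf_charHom hn] at hmul
    have hprod : a ^ r * a ^ s = 1 := by rw [← pow_add]; exact haa
    have hRHS : (ζ ^ (q * r) - 1) - ζ ^ (k - 1) * (ζ ^ (q * s) - 1) = 0 := by
      rw [show ζ ^ (q * r) = a ^ r by rw [ha, ← pow_mul, mul_comm],
          show ζ ^ (q * s) = a ^ s by rw [ha, ← pow_mul, mul_comm],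
          hbar]
      linear_combination (a ^ r - 1) * hchar - hprod
    rw [hRHS] at hmul
    rcases mul_eq_zero.mp hmul with h' | h'
    · exfalso
      rw [sub_eq_zero] at h'
      exact ha1 (ha ▸ h')
    · exact h'
  rw [hval] at hunit
  exact hunit.ne_zero rfl


lemma suff (hn : 2 ≤ n) (hk : 1 ≤ k) (hs : 1 ≤ s)
    (h1 : r = s + 1) (h2 : Nat.gcd n q = 1)
    (h3 : Int.gcd ((k : ℤ) - 1 - q * r) (n : ℤ) = 1) (hodd : ¬ 2 ∣ n)
    (htype : (q * (r - s) : ℤ) ≡ 2 * (k - 1) [ZMOD (n : ℤ)] ∨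
             (q * (r + s) : ℤ) ≡ 0 [ZMOD (n : ℤ)]) :
    Ideal.span {fpoly n k q r s} = ⊤ := by
  by_contra hI
  obtain ⟨m, hmmax, hle⟩ := Ideal.exists_le_maximal _ hI
  haveI := hmmax
  letI : Field (R n ⧸ m) := Ideal.Quotient.field m
  set π : R n →+* R n ⧸ m := Ideal.Quotient.mk m with hπ
  set ζ := zetaOf π with hζ
  have hzn : ζ ^ n = 1 := zetaOf_pow_n π
  have hf0 : π (fpoly n k q r s) = 0 :=
    Ideal.Quotient.eq_zero_iff_mem.mpr (hle (Ideal.subset_span (Set.mem_singleton _)))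
  by_cases hz1 : ζ = 1
  · have hev := chi_fpoly π k q r s
    rw [hf0, ← hζ, hz1] at hev
    simp only [one_pow, Finset.sum_const, Finset.card_range, nsmul_eq_mul, mul_one,
      one_mul] at hev
    rw [h1] at hev
    push_cast at hev
    have : (0 : R n ⧸ m) = 1 := by linear_combination hev
    exact zero_ne_one this
  · set d := orderOf ζ with hd
    have hdn : d ∣ n := orderOf_dvd_of_pow_eq_one hzn
    have hd1 : d ≠ 1 := fun hone => hz1 (orderOf_eq_one_iff.mp hone)
    have hznz : ζ ≠ 0 := by
      intro h0
      rw [h0, zero_pow (by omega : n ≠ 0)] at hzn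
      exact zero_ne_one hzn
    set a := ζ ^ q with ha
    have ha0 : a ≠ 0 := pow_ne_zero _ hznz
    have ha1 : a ≠ 1 := by
      intro h0
      have hdq : d ∣ q := orderOf_dvd_of_pow_eq_one (ha ▸ h0)
      have hdd : d ∣ Nat.gcd n q := Nat.dvd_gcd hdn hdq
      rw [h2] at hdd
      exact hd1 (Nat.dvd_one.mp hdd)
    have hmul := chi_fpoly_mul π k q r s
    rw [hf0, mul_zero, ← hζ] at hmul
    have hA0 : a ^ r - 1 = ζ ^ (k - 1) * (a ^ s - 1) := by
      have hzero : (ζ ^ (q * r) - 1) - ζ ^ (k - 1) * (ζ ^ (q * s) - 1) = 0 := hmul.symm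
      rw [show ζ ^ (q * r) = a ^ r by rw [ha, ← pow_mul, mul_comm],
          show ζ ^ (q * s) = a ^ s by rw [ha, ← pow_mul, mul_comm]] at hzero
      exact sub_eq_zero.mp hzero
    set b := ζ ^ (k - 1) with hb
    have haa : a ^ (r + s) = 1 := by
      cases htype with
      | inl hA =>
        have hdvd : (n:ℤ) ∣ 2 * ((k:ℤ) - 1) - (q:ℤ) * ((r:ℤ) - (s:ℤ)) := hA.dvd
        have hrs1 : ((r:ℤ) - (s:ℤ)) = 1 := by rw [h1]; push_cast; ring
        rw [hrs1, mul_one] at hdvd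
        have hmodn : q ≡ 2 * (k - 1) [MOD n] := by
          rw [Nat.modEq_iff_dvd]
          have hcst : ((2 * (k-1) : ℕ) : ℤ) - (q : ℤ) = 2 * ((k:ℤ) - 1) - (q:ℤ) := by
            rw [Nat.cast_mul, Nat.cast_sub hk]
            push_cast
            ring
          rw [hcst]
          exact hdvd
        have hb2 : b * b = a := by
          rw [hb, ← pow_add, ha, show (k-1) + (k-1) = 2*(k-1) by omega]
          exact (pow_eq_of_modeq hzn hmodn).symm
        have hfac : (a - 1) * (a ^ (2*s+1) - 1) = 0 := by
          have hA0' : a ^ (s+1) - 1 = b * (a ^ s - 1) := by rw [← h1]; exact hA0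
          linear_combination ((a^(s+1) - 1) + b*(a^s - 1)) * hA0' + (a^s - 1)^2 * hb2
        rcases mul_eq_zero.mp hfac with h' | h'
        · exact absurd (by rwa [sub_eq_zero] at h') ha1
        · rw [sub_eq_zero] at h'
          rw [show r + s = 2*s+1 by omega]
          exact h'
      | inr hB =>
        have hdvd : (n:ℤ) ∣ 0 - (q:ℤ) * ((r:ℤ) + (s:ℤ)) := hB.dvd
        have hdvd' : n ∣ q * (r + s) := by
          rw [zero_sub, dvd_neg] at hdvd
          exact_mod_cast hdvd
        have hmod0 : q * (r + s) ≡ 0 [MOD n] := (Nat.modEq_zero_iff_dvd).mpr hdvd'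
        have := pow_eq_of_modeq hzn hmod0
        rw [pow_zero] at this
        rw [ha, ← pow_mul]
        exact this
    have hprod : a ^ r * a ^ s = 1 := by rw [← pow_add]; exact haa
    have hfac2 : (a ^ s - 1) * (b * a ^ s + 1) = 0 := by
      linear_combination (-(a^s)) * hA0 + hprod
    have hbas : b * a ^ s = -1 := by
      rcases mul_eq_zero.mp hfac2 with h' | h'
      · exfalso
        rw [sub_eq_zero] at h'
        have heq : a = 1 := by
          have e1 : a ^ (r + s) = a := by
            rw [show r + s = 2*s+1 by omega]
            calc a ^ (2*s+1) = (a^s)^2 * a := by ring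
            _ = 1^2 * a := by rw [h']
            _ = a := by ring
          rw [haa] at e1
          exact e1.symm
        exact ha1 heq
      · exact eq_neg_of_add_eq_zero_left h'
    have hpow : ζ ^ ((k-1) + q*s) = -1 := by
      rw [pow_add, ← hb, show ζ ^ (q*s) = a ^ s by rw [ha, ← pow_mul, mul_comm]]
      exact hbas
    have hd2e : d ∣ 2 * ((k-1) + q*s) := by
      apply orderOf_dvd_of_pow_eq_one
      rw [mul_comm 2 ((k-1) + q*s), pow_mul, hpow, neg_one_sq]
    have hdqrs : d ∣ q * (r + s) := by
      apply orderOf_dvd_of_pow_eq_one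
      rw [show ζ ^ (q*(r+s)) = a ^ (r+s) by rw [ha, ← pow_mul]]
      exact haa
    have hde : (d:ℤ) ∣ 2 * ((k:ℤ) - 1 - q*r) := by
      have c1 : (d:ℤ) ∣ ((2 * ((k-1) + q*s) : ℕ) : ℤ) := Int.natCast_dvd_natCast.mpr hd2e
      have c2 : (d:ℤ) ∣ ((2 * (q * (r+s)) : ℕ) : ℤ) :=
        Int.natCast_dvd_natCast.mpr (Dvd.dvd.mul_left hdqrs 2)
      have hcast : (2 * ((k:ℤ) - 1 - q*r)) =
          ((2 * ((k-1) + q*s) : ℕ) : ℤ) - ((2 * (q * (r+s)) : ℕ) : ℤ) := by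
        push_cast [Nat.cast_sub hk]
        ring
      rw [hcast]
      exact dvd_sub c1 c2
    have hcop : IsCoprime ((d:ℤ)) ((k:ℤ) - 1 - q*r) := by
      rw [Int.isCoprime_iff_gcd_eq_one]
      set G := Int.gcd (d:ℤ) ((k:ℤ) - 1 - q*r) with hG
      have g1 : (G:ℤ) ∣ (d:ℤ) := by rw [hG]; exact Int.gcd_dvd_left _ _
      have g2 : (G:ℤ) ∣ ((k:ℤ) - 1 - q*r) := by rw [hG]; exact Int.gcd_dvd_right _ _
      have g3 : (G:ℤ) ∣ (n:ℤ) := g1.trans (Int.natCast_dvd_natCast.mpr hdn)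
      have g4 : (G:ℤ) ∣ (Int.gcd ((k:ℤ) - 1 - q*r) (n:ℤ) : ℤ) := Int.dvd_coe_gcd g2 g3
      rw [h3] at g4
      exact Nat.dvd_one.mp (by exact_mod_cast g4)
    have hd2 : (d:ℤ) ∣ 2 := hcop.dvd_of_dvd_mul_right hde
    have hd2' : d ∣ 2 := by exact_mod_cast hd2
    have hdle : d ≤ 2 := Nat.le_of_dvd (by norm_num) hd2'
    have hdne0 : d ≠ 0 := by
      intro h0
      rw [h0] at hdn
      have := Nat.eq_zero_of_zero_dvd hdn
      omega
    have hdeq2 : d = 2 := by omega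
    rw [hdeq2] at hdn
    exact hodd hdn

end Nec
end Stmt10

set_option maxHeartbeats 1000000 in
/-- (Theorem C of [MR4315549].) For `n ≥ 2`, `k, q ≥ 1`, `r ≥ s ≥ 1` with
`gcd(n, k-1, q) = 1`, if `P(r,n,k,s,q)` is of type `Z̃` (i.e. `q(r-s) ≡ 2(k-1)` or
`q(r+s) ≡ 0` mod `n`), then `P(r,n,k,s,q)` is perfect iff `|r-s| = 1`, `gcd(n,q) = 1`
and `gcd(k-1-qr, n) = 1`. -/
theorem stmt_10 (n k q r s : ℕ) (hn : 2 ≤ n) (hk : 1 ≤ k) (hq : 1 ≤ q) (hs : 1 ≤ s)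
    (hrs : s ≤ r) (hgcd : Nat.gcd n (Nat.gcd (k - 1) q) = 1)
    (htype : (q * (r - s) : ℤ) ≡ 2 * (k - 1) [ZMOD (n : ℤ)] ∨
             (q * (r + s) : ℤ) ≡ 0 [ZMOD (n : ℤ)]) :
    commutator (Pgroup r n k s q) = ⊤ ↔
      (|(r : ℤ) - s| = 1 ∧ Nat.gcd n q = 1 ∧ Int.gcd ((k : ℤ) - 1 - q * r) (n : ℤ) = 1) := by
  haveI : NeZero n := ⟨by omega⟩
  rw [Stmt10.bridge n k q r s hn]
  constructor
  · intro h
    have h1 : r = s + 1 := Stmt10.nec1 hn hrs h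
    have h2 : Nat.gcd n q = 1 := Stmt10.nec2 hn hk hs hgcd h1 h
    have hodd := Stmt10.n_odd h2 h1 htype
    have h3 := Stmt10.nec3 hn hk h1 h2 hodd htype h
    refine ⟨?_, h2, h3⟩
    have hval : (r:ℤ) - s = 1 := by rw [h1]; push_cast; ring
    rw [hval]
    exact abs_one
  · rintro ⟨habs, h2, h3⟩
    have h1 : r = s + 1 := by
      have hcases := (abs_eq (by norm_num : (0:ℤ) ≤ 1)).mp habs
      have hle : (s:ℤ) ≤ (r:ℤ) := by exact_mod_cast hrs
      rcases hcases with hv | hv <;> omega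
    exact Stmt10.suff hn hk hs h1 h2 h3 (Stmt10.n_odd h2 h1 htype) htype
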